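/- Suppose S₁,…,S_K are affine subspaces of 𝔽₂^n, each of size at least T, with K · T · binom(n − log₂ T, ≤ ⌊δn/2⌋) > 2^n. Then some two distinct subspaces S_i, S_j contain points at Hamming distance at most 2⌊δn/2⌋ ≤ δn; in particular, {S₁,…,S_K} is not a (K, T, δ, n)-subset code. -/

import Mathlib

def IsSubsetCode (K T : ℕ) (δ : ℝ) (n : ℕ) (S : Fin K → Set (Fin n → ZMod 2)) : Prop :=
  (∀ p, T ≤ (S p).ncard) ∧
  ∀ p q, p ≠ q → ∀ x ∈ S p, ∀ y ∈ S q, δ * n < (hammingDist x y : ℝ)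

/-- `|B(t)|` in `𝔽₂^m`: `binom(m, ≤ t)`. -/
def ballCount (m t : ℕ) : ℕ := ∑ s ∈ Finset.range (t + 1), m.choose s

open Finset in
lemma exists_coords (n : ℕ) : ∀ (d : ℕ) (V : Submodule (ZMod 2) (Fin n → ZMod 2)),
    2 ^ d ≤ (V : Set (Fin n → ZMod 2)).ncard →
    ∃ I : Finset (Fin n), I.card = d ∧
      ∀ a : Fin n → ZMod 2, ∃ v ∈ V, ∀ j ∈ I, v j = a j := by
  intro d
  induction d with
  | zero => exact fun V _ => ⟨∅, rfl, fun a => ⟨0, V.zero_mem, by simp⟩⟩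
  | succ d ih =>
    intro V h
    classical
    obtain ⟨v₀, hv₀V, hv₀⟩ : ∃ v ∈ V, v ≠ 0 := by
      by_contra hcon
      push_neg at hcon
      have hsub : (V : Set (Fin n → ZMod 2)) ⊆ {0} := fun v hv => hcon v hv
      have hle : (V : Set (Fin n → ZMod 2)).ncard ≤ 1 := by
        have := Set.ncard_le_ncard hsub (Set.finite_singleton 0)
        simpa using this
      have h2 : (2:ℕ) ≤ 2 ^ (d+1) := Nat.le_self_pow (by omega) 2
      omega
    obtain ⟨i, hi0⟩ : ∃ i, v₀ i ≠ 0 := by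
      by_contra hcon
      push_neg at hcon
      exact hv₀ (funext hcon)
    have hi : v₀ i = 1 := by
      have : ∀ x : ZMod 2, x ≠ 0 → x = 1 := by decide
      exact this _ hi0
    set A : Set (Fin n → ZMod 2) := {v | v ∈ V ∧ v i = 0} with hAdef
    have haddself : ∀ w : Fin n → ZMod 2, w + w = 0 := by
      intro w; funext j; exact CharTwo.add_self_eq_zero (w j)
    have hB : {v : Fin n → ZMod 2 | v ∈ V ∧ v i = 1} = (· + v₀) '' A := by
      ext w
      constructor
      · rintro ⟨hwV, hwi⟩
        refine ⟨w + v₀, ⟨V.add_mem hwV hv₀V, by simp [hwi, hi, CharTwo.add_self_eq_zero]⟩, ?_⟩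
        show w + v₀ + v₀ = w
        rw [add_assoc, haddself, add_zero]
      · rintro ⟨w', ⟨hw'V, hw'i⟩, rfl⟩
        exact ⟨V.add_mem hw'V hv₀V, by simp [hw'i, hi]⟩
    have hsplit : (V : Set (Fin n → ZMod 2)) = A ∪ {v | v ∈ V ∧ v i = 1} := by
      ext w
      simp only [Set.mem_union, hAdef, Set.mem_setOf_eq, SetLike.mem_coe]
      have hx : ∀ x : ZMod 2, x = 0 ∨ x = 1 := by decide
      have := hx (w i)
      tauto
    have hdisj : Disjoint A {v : Fin n → ZMod 2 | v ∈ V ∧ v i = 1} := by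
      rw [Set.disjoint_left]
      rintro w ⟨_, h0⟩ ⟨_, h1⟩
      rw [h0] at h1
      exact absurd h1 (by decide)
    have hcardB : ({v : Fin n → ZMod 2 | v ∈ V ∧ v i = 1}).ncard = A.ncard := by
      rw [hB]
      exact Set.ncard_image_of_injective A (add_left_injective v₀)
    have hcardV : (V : Set (Fin n → ZMod 2)).ncard = A.ncard + A.ncard := by
      rw [hsplit, Set.ncard_union_eq hdisj (Set.toFinite _) (Set.toFinite _), hcardB]
    have hcardA : 2 ^ d ≤ A.ncard := by
      rw [hcardV] at h
      have h2 : 2 ^ (d+1) = 2 ^ d + 2 ^ d := by ring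
      rw [h2] at h
      have h3 : 2 * 2 ^ d ≤ 2 * A.ncard := by rw [two_mul, two_mul]; exact h
      exact Nat.le_of_mul_le_mul_left h3 (by norm_num)

    set V' : Submodule (ZMod 2) (Fin n → ZMod 2) :=
      V ⊓ LinearMap.ker (LinearMap.proj (R := ZMod 2) (φ := fun _ : Fin n => ZMod 2) i) with hV'def
    have hV'A : (V' : Set (Fin n → ZMod 2)) = A := by
      ext w
      simp [hV'def, hAdef, Submodule.mem_inf, LinearMap.mem_ker]
    obtain ⟨I, hIcard, hIsurj⟩ := ih V' (by rw [hV'A]; exact hcardA)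
    have hiI : i ∉ I := by
      intro hin
      obtain ⟨v, hvV', hv⟩ := hIsurj (fun _ => 1)
      have h0 : v i = 0 := by
        have := hvV'
        rw [Submodule.mem_inf, LinearMap.mem_ker] at this
        exact this.2
      have h1 : v i = 1 := hv i hin
      rw [h0] at h1
      exact absurd h1 (by decide)
    refine ⟨insert i I, by rw [card_insert_of_notMem hiI, hIcard], ?_⟩
    intro a
    obtain ⟨v', hv'V', hv'⟩ := hIsurj (a + (a i) • v₀)
    rw [Submodule.mem_inf, LinearMap.mem_ker] at hv'V'
    refine ⟨v' + (a i) • v₀, V.add_mem hv'V'.1 (V.smul_mem _ hv₀V), ?_⟩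
    intro j hj
    rcases mem_insert.mp hj with heq | hjI
    · have h0 : v' i = 0 := hv'V'.2
      rw [heq]
      show v' i + a i • v₀ i = a i
      rw [h0, hi, smul_eq_mul, mul_one, zero_add]
    · have hval := hv' j hjI
      simp only [Pi.add_apply, Pi.smul_apply, smul_eq_mul] at hval ⊢
      rw [hval]
      have : ∀ x : ZMod 2, a j + x + x = a j := by
        intro x; rw [add_assoc, CharTwo.add_self_eq_zero, add_zero]
      exact this _


def chi (n : ℕ) (s : Finset (Fin n)) : Fin n → ZMod 2 := fun j => if j ∈ s then 1 else 0



/-- If `S₁, …, S_K` are affine subspaces of `𝔽₂^n`, each of size at least `T = 2^d`,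
and `K · T · binom(n − d, ≤ ⌊δn/2⌋) > 2^n`, then two distinct subspaces contain points
at Hamming distance at most `2⌊δn/2⌋ ≤ δn`; in particular they do not form a
`(K, T, δ, n)`-subset code. -/
theorem no_linear_subset_code
    (n K d : ℕ) (δ : ℝ) (hδ : 0 ≤ δ)
    (S : Fin K → Set (Fin n → ZMod 2))
    (hAff : ∀ p, ∃ (u : Fin n → ZMod 2) (V : Submodule (ZMod 2) (Fin n → ZMod 2)),
      S p = {w | ∃ v ∈ V, w = u + v})
    (hSize : ∀ p, 2 ^ d ≤ (S p).ncard)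
    (hbig : 2 ^ n < K * 2 ^ d * ballCount (n - d) ⌊δ * n / 2⌋₊) :
    (∃ p q : Fin K, p ≠ q ∧ ∃ x ∈ S p, ∃ y ∈ S q,
      (hammingDist x y : ℝ) ≤ 2 * (⌊δ * n / 2⌋₊ : ℝ)) ∧
    ¬ IsSubsetCode K (2 ^ d) δ n S := by
  classical
  set t := ⌊δ * n / 2⌋₊ with htdef
  have main : ∃ p q : Fin K, p ≠ q ∧ ∃ x ∈ S p, ∃ y ∈ S q,
      hammingDist x y ≤ 2 * t := by
    set X : Fin K → Finset (Fin n → ZMod 2) :=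
      fun p => Finset.univ.filter (fun w => ∃ x ∈ S p, hammingDist w x ≤ t) with hXdef
    have hXcard : ∀ p : Fin K, 2 ^ d * ballCount (n - d) t ≤ (X p).card := by
      intro p
      obtain ⟨u, V, hSV⟩ := hAff p
      have himg : S p = (fun v => u + v) '' (V : Set (Fin n → ZMod 2)) := by
        rw [hSV]; ext w
        simp only [Set.mem_setOf_eq, Set.mem_image, SetLike.mem_coe]
        constructor
        · rintro ⟨v, hv, rfl⟩; exact ⟨v, hv, rfl⟩
        · rintro ⟨v, hv, rfl⟩; exact ⟨v, hv, rfl⟩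
      have hV : 2 ^ d ≤ (V : Set (Fin n → ZMod 2)).ncard := by
        have := hSize p
        rwa [himg, Set.ncard_image_of_injective _ (add_right_injective u)] at this
      obtain ⟨I, hIcard, hIsurj⟩ := exists_coords n d V hV
      have hg : ∀ a : (↥I → ZMod 2), ∃ w ∈ S p, ∀ j, ∀ h : j ∈ I, w j = a ⟨j, h⟩ := by
        intro a
        obtain ⟨v, hvV, hv⟩ := hIsurj (fun j => if h : j ∈ I then a ⟨j, h⟩ + u j else 0)
        refine ⟨u + v, by rw [hSV]; exact ⟨v, hvV, rfl⟩, ?_⟩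
        intro j hjmem
        have hval := hv j hjmem
        simp only [dif_pos hjmem] at hval
        show u j + v j = a ⟨j, hjmem⟩
        rw [hval, add_comm (a _) (u j), ← add_assoc, CharTwo.add_self_eq_zero, zero_add]
      choose g hgS hgI using hg
      set B : Finset (Finset (Fin n)) :=
        (Finset.range (t + 1)).biUnion (fun k => (Iᶜ).powersetCard k) with hBdef
      have hBcard : B.card = ballCount (n - d) t := by
        rw [hBdef, Finset.card_biUnion]
        · unfold ballCount
          apply Finset.sum_congr rfl
          intro k _
          rw [Finset.card_powersetCard, Finset.card_compl, Fintype.card_fin, hIcard]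
        · intro x _ y _ hxy
          simp only [Function.onFun]; rw [Finset.disjoint_left]
          intro s hsx hsy
          rw [Finset.mem_powersetCard] at hsx hsy
          exact hxy (hsx.2.symm.trans hsy.2)
      have hsubc : ∀ s ∈ B, s ⊆ Iᶜ ∧ s.card ≤ t := by
        intro s hs
        rw [hBdef, Finset.mem_biUnion] at hs
        obtain ⟨k, hk, hs⟩ := hs
        rw [Finset.mem_powersetCard] at hs
        rw [Finset.mem_range] at hk
        exact ⟨hs.1, by omega⟩
      set D : Finset ((↥I → ZMod 2) × Finset (Fin n)) := Finset.univ ×ˢ B with hDdef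
      set F : (↥I → ZMod 2) × Finset (Fin n) → (Fin n → ZMod 2) :=
        fun z => g z.1 + chi n z.2 with hFdef
      have hmaps : ∀ z ∈ D, F z ∈ X p := by
        rintro ⟨a, s⟩ hz
        rw [hDdef, Finset.mem_product] at hz
        obtain ⟨hsub, hcard⟩ := hsubc s hz.2
        simp only [hXdef, Finset.mem_filter, Finset.mem_univ, true_and]
        refine ⟨g a, hgS a, ?_⟩
        have hfil : (Finset.univ.filter fun j => F (a, s) j ≠ g a j) = s := by
          ext j
          simp only [Finset.mem_filter, Finset.mem_univ, true_and, hFdef, Pi.add_apply]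
          by_cases hjs : j ∈ s
          · have : ∀ x : ZMod 2, x + 1 ≠ x := by decide
            simp [chi, hjs, this]
          · simp [chi, hjs]
        calc hammingDist (F (a, s)) (g a) = s.card := by
              unfold hammingDist; rw [hfil]
          _ ≤ t := hcard
      have hinj : Set.InjOn F D := by
        rintro ⟨a, s⟩ hz ⟨a', s'⟩ hz' heq
        rw [Finset.mem_coe, hDdef, Finset.mem_product] at hz hz'
        obtain ⟨hsub, -⟩ := hsubc s hz.2
        obtain ⟨hsub', -⟩ := hsubc s' hz'.2
        have hzero : ∀ j ∈ I, chi n s j = 0 ∧ chi n s' j = 0 := by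
          intro j hj
          constructor
          · simp only [chi, ite_eq_right_iff]
            intro hjs; exact absurd hj (Finset.mem_compl.mp (hsub hjs))
          · simp only [chi, ite_eq_right_iff]
            intro hjs; exact absurd hj (Finset.mem_compl.mp (hsub' hjs))
        have haa : a = a' := by
          funext ⟨j, hjI⟩
          have h1 : F (a, s) j = F (a', s') j := congrFun heq j
          simp only [hFdef, Pi.add_apply, (hzero j hjI).1, (hzero j hjI).2, add_zero] at h1
          rwa [hgI a j hjI, hgI a' j hjI] at h1
        subst haa
        have hchi : chi n s = chi n s' := by
          have : g a + chi n s = g a + chi n s' := heq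
          exact add_left_cancel this
        have hss : s = s' := by
          ext j
          have := congrFun hchi j
          simp only [chi] at this
          by_cases h1 : j ∈ s <;> by_cases h2 : j ∈ s' <;> simp_all
        rw [hss]
      have hle := Finset.card_le_card_of_injOn F hmaps hinj
      rwa [hDdef, Finset.card_product, Finset.card_univ, Fintype.card_fun,
        Fintype.card_coe, hIcard, ZMod.card, hBcard] at hle
    by_contra hcon
    push_neg at hcon
    have hdisj : ∀ p q : Fin K, p ≠ q → Disjoint (X p) (X q) := by
      intro p q hpq
      rw [Finset.disjoint_left]
      intro w hwp hwq
      simp only [hXdef, Finset.mem_filter, Finset.mem_univ, true_and] at hwp hwq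
      obtain ⟨x, hx, hdx⟩ := hwp
      obtain ⟨y, hy, hdy⟩ := hwq
      have htri : hammingDist x y ≤ 2 * t := by
        calc hammingDist x y ≤ hammingDist x w + hammingDist w y := hammingDist_triangle x w y
          _ ≤ t + t := by
              have := hammingDist_comm x w
              omega
          _ = 2 * t := by ring
      exact absurd htri (Nat.not_le.mpr (hcon p q hpq x hx y hy))
    have hunion : ((Finset.univ : Finset (Fin K)).biUnion X).card = ∑ p, (X p).card :=
      Finset.card_biUnion (fun p _ q _ h => hdisj p q h)
    have h1 : ∑ p, (X p).card ≤ 2 ^ n := by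
      rw [← hunion]
      calc ((Finset.univ : Finset (Fin K)).biUnion X).card
          ≤ (Finset.univ : Finset (Fin n → ZMod 2)).card := Finset.card_le_card (Finset.subset_univ _)
        _ = 2 ^ n := by rw [Finset.card_univ, Fintype.card_fun, ZMod.card, Fintype.card_fin]
    have h2 : K * (2 ^ d * ballCount (n - d) t) ≤ ∑ p, (X p).card := by
      calc K * (2 ^ d * ballCount (n - d) t)
          = ∑ _p : Fin K, 2 ^ d * ballCount (n - d) t := by
            rw [Finset.sum_const, Finset.card_univ, Fintype.card_fin, smul_eq_mul]
        _ ≤ ∑ p, (X p).card := Finset.sum_le_sum (fun p _ => hXcard p)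
    rw [mul_assoc] at hbig
    omega
  obtain ⟨p, q, hpq, x, hx, y, hy, hle⟩ := main
  have hreal : (hammingDist x y : ℝ) ≤ 2 * (t : ℝ) := by exact_mod_cast hle
  have htle : 2 * (t : ℝ) ≤ δ * n := by
    have h0 : (0:ℝ) ≤ δ * n / 2 := by positivity
    have := Nat.floor_le h0
    rw [htdef]
    linarith
  refine ⟨⟨p, q, hpq, x, hx, y, hy, hreal⟩, ?_⟩
  rintro ⟨-, hdist⟩
  have := hdist p q hpq x hx y hy
  linarith
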